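/- Suppose V_r is the fixed point of the robust Bellman consistency operator for r and π, i.e. V_r(s) = r(s,π(s)) + γ min_{P ∈ 𝒫_{s,π(s)}} ⟨P, V_r⟩ for all s ∈ S, and each V_{g_i} is the fixed point of the robust Bellman consistency operator for g_i and π. Then the function V_r − Σ_{i=1}^m λ_i V_{g_i} is a fixed point of the consistency operator T^π, and by the γ-contraction property of T^π it is its unique fixed point. -/

import Mathlib

/-- sInf of a set translated by `-C`. -/
lemma sInf_image_sub_const (B : Set ℝ) (hne : B.Nonempty) (hbd : BddBelow B) (C : ℝ) :
    sInf ((fun x => x - C) '' B) = sInf B - C := by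
  obtain ⟨L, hL⟩ := hbd
  have hbd' : BddBelow ((fun x => x - C) '' B) := by
    refine ⟨L - C, ?_⟩
    rintro y ⟨b, hb, rfl⟩
    exact sub_le_sub_right (hL hb) C
  apply le_antisymm
  · rw [le_sub_iff_add_le]
    apply le_csInf hne
    intro b hb
    rw [← le_sub_iff_add_le]
    exact csInf_le hbd' ⟨b, hb, rfl⟩
  · apply le_csInf (hne.image _)
    rintro y ⟨b, hb, rfl⟩
    exact sub_le_sub_right (csInf_le ⟨L, hL⟩ hb) C

/-- Shift formula for the robust inner minimization. -/
lemma sInf_shift {S : Type*} [Fintype S] (K : Set (S → ℝ)) (hne : K.Nonempty)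
    (hcpt : IsCompact K) (V c : S → ℝ) :
    sInf ((fun p : S → ℝ => ∑ s', (p s' - c s') * V s') '' K)
      = sInf ((fun p : S → ℝ => ∑ s', p s' * V s') '' K) - ∑ s', c s' * V s' := by
  have hcont : Continuous (fun p : S → ℝ => ∑ s', p s' * V s') :=
    continuous_finset_sum _ fun s' _ => (continuous_apply s').mul continuous_const
  have himg : IsCompact ((fun p : S → ℝ => ∑ s', p s' * V s') '' K) := hcpt.image hcont
  have heq : (fun p : S → ℝ => ∑ s', (p s' - c s') * V s') '' K
      = (fun x => x - ∑ s', c s' * V s') '' ((fun p : S → ℝ => ∑ s', p s' * V s') '' K) := by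
    rw [Set.image_image]
    apply Set.image_congr'
    intro p
    simp [sub_mul, Finset.sum_sub_distrib]
  rw [heq, sInf_image_sub_const _ (hne.image _) himg.bddBelow]

/-- If `V_r` and the `V_{g_i}` are the fixed points of the robust
Bellman consistency operators for `r` and the `g_i` under policy `π`, then
`V_r − Σᵢ λᵢ V_{g_i}` is the (unique) fixed point of the consistency operator
`T^π` (Proposition 3(3), fixed-point part). -/
theorem consistency_operator_fixed_point
    {S A : Type*} [Fintype S] [Nonempty S] [Fintype A] [Nonempty A]
    (γ : ℝ) (hγ0 : 0 ≤ γ) (hγ1 : γ < 1)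
    (Po : S → A → S → ℝ)
    (hPo : ∀ s a, (∀ s', 0 ≤ Po s a s') ∧ ∑ s', Po s a s' = 1)
    (Pu : S → A → Set (S → ℝ))
    (hPusub : ∀ s a, Pu s a ⊆ {p : S → ℝ | (∀ s', 0 ≤ p s') ∧ ∑ s', p s' = 1})
    (hPune : ∀ s a, (Pu s a).Nonempty)
    (hPucpt : ∀ s a, IsCompact (Pu s a))
    (m : ℕ) (r : S → A → ℝ) (g : Fin m → S → A → ℝ)
    (lam : Fin m → ℝ) (hlam : ∀ i, 0 ≤ lam i)
    (π : S → A)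
    (Vr : S → ℝ) (Vg : Fin m → S → ℝ)
    (hVr : ∀ s, Vr s = r s (π s)
      + γ * sInf ((fun p : S → ℝ => ∑ s', p s' * Vr s') '' Pu s (π s)))
    (hVg : ∀ i s, Vg i s = g i s (π s)
      + γ * sInf ((fun p : S → ℝ => ∑ s', p s' * Vg i s') '' Pu s (π s)))
    (T : (S → ℝ) → (S → ℝ))
    (hT : ∀ (v : S → ℝ) (s : S), T v s =
      r s (π s) - (∑ i, lam i * g i s (π s))
      + γ * (∑ s', Po s (π s) s' * v s')
      + γ * sInf ((fun p : S → ℝ => ∑ s', (p s' - Po s (π s) s') * Vr s') '' Pu s (π s))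
      - γ * ∑ i, lam i *
          sInf ((fun p : S → ℝ => ∑ s', (p s' - Po s (π s) s') * Vg i s') '' Pu s (π s))) :
    T (fun s => Vr s - ∑ i, lam i * Vg i s) = (fun s => Vr s - ∑ i, lam i * Vg i s) ∧
    ∀ w : S → ℝ, T w = w → w = fun s => Vr s - ∑ i, lam i * Vg i s := by
  set V : S → ℝ := fun s => Vr s - ∑ i, lam i * Vg i s with hV
  -- key: linearity of the v-dependent part
  have hswap : ∀ s : S, ∑ s', Po s (π s) s' * (∑ i, lam i * Vg i s')
      = ∑ i, lam i * ∑ s', Po s (π s) s' * Vg i s' := by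
    intro s
    simp_rw [Finset.mul_sum]
    rw [Finset.sum_comm]
    exact Finset.sum_congr rfl fun i _ => Finset.sum_congr rfl fun s' _ => by ring
  have hfix : T V = V := by
    funext s
    rw [hT V s]
    rw [sInf_shift _ (hPune s (π s)) (hPucpt s (π s)) Vr (Po s (π s))]
    have hrw : ∀ i : Fin m,
        sInf ((fun p : S → ℝ => ∑ s', (p s' - Po s (π s) s') * Vg i s') '' Pu s (π s))
        = sInf ((fun p : S → ℝ => ∑ s', p s' * Vg i s') '' Pu s (π s))
            - ∑ s', Po s (π s) s' * Vg i s' :=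
      fun i => sInf_shift _ (hPune s (π s)) (hPucpt s (π s)) (Vg i) (Po s (π s))
    have hsum1 : ∑ i, lam i *
        sInf ((fun p : S → ℝ => ∑ s', (p s' - Po s (π s) s') * Vg i s') '' Pu s (π s))
        = ∑ i, lam i * (sInf ((fun p : S → ℝ => ∑ s', p s' * Vg i s') '' Pu s (π s))
            - ∑ s', Po s (π s) s' * Vg i s') :=
      Finset.sum_congr rfl fun i _ => by rw [hrw i]
    rw [hsum1]
    have hPoV : ∑ s', Po s (π s) s' * V s'
        = (∑ s', Po s (π s) s' * Vr s') - ∑ i, lam i * ∑ s', Po s (π s) s' * Vg i s' := by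
      simp_rw [hV, mul_sub, Finset.sum_sub_distrib]
      rw [hswap s]
    rw [hPoV]
    show _ = Vr s - ∑ i, lam i * Vg i s
    have hsum2 : ∑ i, lam i * Vg i s
        = ∑ i, lam i * (g i s (π s)
            + γ * sInf ((fun p : S → ℝ => ∑ s', p s' * Vg i s') '' Pu s (π s))) :=
      Finset.sum_congr rfl fun i _ => by rw [hVg i s]
    rw [hsum2, hVr s]
    simp only [mul_sub, mul_add, Finset.sum_sub_distrib, Finset.sum_add_distrib, Finset.mul_sum]
    ring_nf
  refine ⟨hfix, fun w hw => ?_⟩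
  -- contraction: w s - V s = γ * ⟨Po, w - V⟩
  have hdiff : ∀ s, w s - V s = γ * ∑ s', Po s (π s) s' * (w s' - V s') := by
    intro s
    have h1 : w s = T w s := by rw [hw]
    have h2 : V s = T V s := by rw [hfix]
    rw [h1, h2, hT w s, hT V s]
    simp only [mul_sub, Finset.sum_sub_distrib]
    ring
  obtain ⟨s0, hs0⟩ := Finite.exists_max (fun s => |w s - V s|)
  have hM : |w s0 - V s0| ≤ γ * |w s0 - V s0| := by
    calc |w s0 - V s0| = |γ * ∑ s', Po s0 (π s0) s' * (w s' - V s')| := by rw [hdiff s0]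
      _ = γ * |∑ s', Po s0 (π s0) s' * (w s' - V s')| := by
          rw [abs_mul, abs_of_nonneg hγ0]
      _ ≤ γ * ∑ s', |Po s0 (π s0) s' * (w s' - V s')| :=
          mul_le_mul_of_nonneg_left (Finset.abs_sum_le_sum_abs _ _) hγ0
      _ ≤ γ * ∑ s', Po s0 (π s0) s' * |w s0 - V s0| := by
          apply mul_le_mul_of_nonneg_left _ hγ0
          apply Finset.sum_le_sum
          intro s' _
          rw [abs_mul, abs_of_nonneg ((hPo s0 (π s0)).1 s')]
          exact mul_le_mul_of_nonneg_left (hs0 s') ((hPo s0 (π s0)).1 s')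
      _ = γ * |w s0 - V s0| := by
          rw [← Finset.sum_mul, (hPo s0 (π s0)).2, one_mul]
  have hM0 : |w s0 - V s0| ≤ 0 := by nlinarith [abs_nonneg (w s0 - V s0)]
  funext s
  have := le_trans (hs0 s) hM0
  have := abs_nonneg (w s - V s)
  have : |w s - V s| = 0 := le_antisymm ‹|w s - V s| ≤ 0› ‹0 ≤ |w s - V s|›
  have := abs_eq_zero.mp this
  linarith [this]
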